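/- Let K be a field extension of k and L, M nonzero finite-dimensional k-subspaces of K. If L ∼ M in the Grothendieck sense (there exists a nonzero finite-dimensional subspace N with LN = MN), then every element of M is integral over L, i.e. M ⊆ L̄. -/

import Mathlib

open MvPolynomial Polynomial Matrix

section Aux

variable {k K : Type*} [Field k] [Field K] [Algebra k K]

lemma aux_prod_pow_mem (L : Submodule k K) {σ : Type*} (s : Finset σ) (e : σ → ℕ)
    (v : σ → K) (hv : ∀ j ∈ s, v j ∈ L) :
    (∏ j ∈ s, v j ^ e j) ∈ L ^ (∑ j ∈ s, e j) := by
  classical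
  induction s using Finset.induction with
  | empty => simpa using Submodule.one_le.mp le_rfl
  | @insert a s ha ih =>
    rw [Finset.prod_insert ha, Finset.sum_insert ha, pow_add]
    exact Submodule.mul_mem_mul (Submodule.pow_mem_pow _ (hv a (Finset.mem_insert_self a s)) _)
      (ih fun j hj => hv j (Finset.mem_insert_of_mem hj))

lemma aux_hom_eval₂_mem (L : Submodule k K) {σ : Type*} (P : MvPolynomial σ k) (i : ℕ)
    (hP : P.IsHomogeneous i) (v : σ → K) (hv : ∀ s, v s ∈ L) :
    MvPolynomial.eval₂ (algebraMap k K) v P ∈ L ^ i := by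
  rw [MvPolynomial.eval₂_eq]
  apply Submodule.sum_mem
  intro d hd
  rw [← Algebra.smul_def]
  apply Submodule.smul_mem
  have hdeg : (∑ j ∈ d.support, d j) = i := by
    have h1 := hP (MvPolynomial.mem_support_iff.mp hd)
    have h2 : Finsupp.degree d = Finsupp.weight 1 d := by
      rw [Finsupp.degree_eq_weight_one]; rfl
    simpa [Finsupp.degree_apply] using h2.trans h1
  rw [← hdeg]
  exact aux_prod_pow_mem L d.support _ v fun j _ => hv j

lemma aux_charpoly_coeff_mem (L : Submodule k K) {d : ℕ} (C : Matrix (Fin d) (Fin d) K)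
    (hC : ∀ i j, C i j ∈ L) (i : ℕ) (hi : i ≤ d) :
    C.charpoly.coeff (d - i) ∈ L ^ i := by
  classical
  have h1 : (Matrix.of (Function.curry fun p : Fin d × Fin d => C p.1 p.2)) = C := by
    ext a b; rfl
  have h2 := Matrix.charpoly.univ_coeff_eval₂Hom (R := k) (Fin d)
    (algebraMap k K) (fun p : Fin d × Fin d => C p.1 p.2) (d - i)
  rw [h1] at h2
  rw [← h2]
  have hhom : ((Matrix.charpoly.univ k (Fin d)).coeff (d - i)).IsHomogeneous i := by
    apply Matrix.charpoly.univ_coeff_isHomogeneous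
    rw [Fintype.card_fin]
    omega
  exact aux_hom_eval₂_mem L _ i hhom _ fun p => hC p.1 p.2

end Aux

theorem groth_equiv_implies_integral
    (k K : Type*) [Field k] [Field K] [Algebra k K]
    (L M : Submodule k K) (hL : L ≠ ⊥) (hM : M ≠ ⊥)
    (hLfin : FiniteDimensional k L) (hMfin : FiniteDimensional k M)
    (h : ∃ N : Submodule k K, N ≠ ⊥ ∧ FiniteDimensional k N ∧ L * N = M * N) :
    ∀ g ∈ M, ∃ m : ℕ, 0 < m ∧ ∃ a : ℕ → K,
      (∀ i ∈ Finset.Icc 1 m, a i ∈ L ^ i) ∧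
      g ^ m + ∑ i ∈ Finset.Icc 1 m, a i * g ^ (m - i) = 0 := by
  classical
  obtain ⟨N, hN, hNfin, hLN⟩ := h
  intro g hg
  haveI : Nontrivial N := Submodule.nontrivial_iff_ne_bot.mpr hN
  set d := Module.finrank k N with hd
  have hdpos : 0 < d := Module.finrank_pos
  let b : Module.Basis (Fin d) k N := Module.finBasis k N
  set n : Fin d → K := fun i => (b i : K) with hn
  -- every element of L * N is a combination ∑ cᵢ nᵢ with cᵢ ∈ L
  have hspan : ∀ x ∈ L * N, ∃ c : Fin d → K, (∀ i, c i ∈ L) ∧ x = ∑ i, c i * n i := by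
    intro x hx
    have hxP : x ∈ ⨆ i, L.map (LinearMap.mulRight k (n i)) := by
      refine (Submodule.mul_le.mpr ?_) hx
      intro l hl y hy
      have hy' : y = ∑ i, b.repr ⟨y, hy⟩ i • n i := by
        conv_lhs => rw [show y = ((⟨y, hy⟩ : N) : K) from rfl, ← b.sum_repr ⟨y, hy⟩]
        push_cast
        rfl
      have hly : l * y = ∑ i, (b.repr ⟨y, hy⟩ i • l) * n i := by
        conv_lhs => rw [hy']
        rw [Finset.mul_sum]
        exact Finset.sum_congr rfl fun i _ => by
          rw [mul_smul_comm, smul_mul_assoc]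
      rw [hly]
      refine Submodule.sum_mem _ fun i _ => ?_
      exact Submodule.mem_iSup_of_mem i ⟨_, L.smul_mem _ hl, rfl⟩
    rw [Submodule.mem_iSup_iff_exists_finsupp] at hxP
    obtain ⟨f, hf, hfx⟩ := hxP
    choose c hcL hcmul using fun i => Submodule.mem_map.mp (hf i)
    refine ⟨c, hcL, ?_⟩
    rw [← hfx, Finsupp.sum_fintype _ _ fun _ => rfl]
    exact Finset.sum_congr rfl fun i _ => (hcmul i).symm
  -- build the matrix
  have hgn : ∀ j, g * n j ∈ L * N := by
    intro j
    rw [hLN]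
    exact Submodule.mul_mem_mul hg (b j).2
  choose c hcL hceq using fun j => hspan _ (hgn j)
  set Cm : Matrix (Fin d) (Fin d) K := Matrix.of c with hCm
  -- the vector n is annihilated by scalar g - Cm
  have hmv : (Matrix.scalar (Fin d) g - Cm) *ᵥ n = 0 := by
    funext j
    simp only [Matrix.sub_mulVec, Pi.sub_apply, Pi.zero_apply, sub_eq_zero]
    have h1 : ((Matrix.scalar (Fin d) g) *ᵥ n) j = g * n j := by
      simp [Matrix.mulVec, dotProduct, Matrix.scalar, Matrix.diagonal_apply,
        Finset.sum_ite_eq, ite_mul]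
    rw [h1, hceq j]
    simp [Matrix.mulVec, dotProduct, Cm]
  have hn0 : n ≠ 0 := by
    intro h0
    have : (b ⟨0, hdpos⟩ : K) = 0 := congrFun h0 ⟨0, hdpos⟩
    exact b.ne_zero ⟨0, hdpos⟩ (by exact_mod_cast Subtype.ext this)
  have hdet : (Matrix.scalar (Fin d) g - Cm).det = 0 := by
    by_contra hne
    exact hn0 (Matrix.eq_zero_of_mulVec_eq_zero hne hmv)
  -- charpoly evaluated at g is this determinant
  have heval : Cm.charpoly.eval g = 0 := by
    have h2 : Cm.charpoly.eval g = ((Matrix.charmatrix Cm).map (Polynomial.evalRingHom g)).det := by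
      rw [Matrix.charpoly, ← RingHom.mapMatrix_apply, ← RingHom.map_det]
      rfl
    rw [h2]
    convert hdet using 2
    ext i j
    simp [Matrix.charmatrix_apply, Matrix.scalar, Matrix.diagonal_apply, apply_ite (eval g)]
  have hnatdeg : Cm.charpoly.natDegree = d := by
    rw [Matrix.charpoly_natDegree_eq_dim, Fintype.card_fin]
  -- assemble
  refine ⟨d, hdpos, fun i => Cm.charpoly.coeff (d - i), fun i hi => ?_, ?_⟩
  · obtain ⟨h1, h2⟩ := Finset.mem_Icc.mp hi
    exact aux_charpoly_coeff_mem L Cm (fun a b => hcL a b) i h2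
  · have hsum : Cm.charpoly.eval g =
        g ^ d + ∑ i ∈ Finset.Icc 1 d, Cm.charpoly.coeff (d - i) * g ^ (d - i) := by
      rw [Polynomial.eval_eq_sum_range, hnatdeg, Finset.sum_range_succ]
      have hlead : Cm.charpoly.coeff d = 1 := by
        have h3 := Cm.charpoly_monic.coeff_natDegree
        rwa [hnatdeg] at h3
      rw [hlead, one_mul, add_comm]
      congr 1
      refine Finset.sum_nbij' (fun j => d - j) (fun i => d - i) ?_ ?_ ?_ ?_ ?_
      · intro j hj
        rw [Finset.mem_range] at hj
        beta_reduce
        rw [Finset.mem_Icc]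
        omega
      · intro i hi
        rw [Finset.mem_Icc] at hi
        beta_reduce
        rw [Finset.mem_range]
        omega
      · intro j hj
        rw [Finset.mem_range] at hj
        beta_reduce
        omega
      · intro i hi
        rw [Finset.mem_Icc] at hi
        beta_reduce
        omega
      · intro j hj
        rw [Finset.mem_range] at hj
        beta_reduce
        have hxx : d - (d - j) = j := by omega
        rw [hxx]
    rw [← hsum, heval]
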